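/- Let d, k ≥ 1 be integers, ε ∈ [0, 2^{-kd}], and let μ be a dyadic mean (k,η,ε)-porous Borel probability measure on [0,1)^d. Let R* be the tree of cubes constructed from μ as described (with any admissible choice of small-measure cubes), and for x ∈ [0,1)^d and n ≥ 1 set N_n(x) = #{i ∈ {0,…,n−1} : R_i(x) ∈ 𝒩}, let M_n(x) be the dyadic level of R_n(x) (i.e. R_n(x) ∈ D_{M_n(x)}), and η_n(x) = 1 − N_n(x)/M_n(x). Then liminf_{n→∞} η_n(x) ≥ η for μ-almost every x. -/

import Mathlib

open MeasureTheory Filter Metric Set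
open scoped ENNReal NNReal

/-- The half-open dyadic cube of side `2^{-n}` containing `x`. -/
def dyadicCube (d n : ℕ) (x : EuclideanSpace ℝ (Fin d)) : Set (EuclideanSpace ℝ (Fin d)) :=
  {y | ∀ j : Fin d, ⌊(2 : ℝ) ^ n * y j⌋ = ⌊(2 : ℝ) ^ n * x j⌋}

/-- `por₂(μ,x,n,ε) ≤ k`: there is `1 ≤ j ≤ k` and a dyadic subcube `R` of `D_n(x)`,
`j` levels below, with `μ(R) ≤ ε·μ(D_n(x))`. -/
def por2Le {d : ℕ} (μ : Measure (EuclideanSpace ℝ (Fin d)))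
    (x : EuclideanSpace ℝ (Fin d)) (n k : ℕ) (ε : ℝ) : Prop :=
  ∃ j : ℕ, 1 ≤ j ∧ j ≤ k ∧ ∃ y ∈ dyadicCube d n x,
    μ (dyadicCube d (n + j) y) ≤ ENNReal.ofReal ε * μ (dyadicCube d n x)

/-- `μ` is dyadic mean `(k,η,ε)`-porous: for `μ`-a.e. `x`,
`liminf_n (1/n)·#{i < n : por₂(μ,x,i,ε) ≤ k} ≥ η`. -/
def DyadicMeanPorousWith {d : ℕ} (μ : Measure (EuclideanSpace ℝ (Fin d)))
    (k : ℕ) (η ε : ℝ) : Prop :=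
  ∀ᵐ x ∂μ, η ≤ Filter.liminf
    (fun n : ℕ => (Set.ncard {i : ℕ | i < n ∧ por2Le μ x i k ε} : ℝ) / n) Filter.atTop

/-- `μ` is dyadic mean `(k,η)`-porous: dyadic mean `(k,η,ε)`-porous for all `ε > 0`. -/
def DyadicMeanPorous {d : ℕ} (μ : Measure (EuclideanSpace ℝ (Fin d))) (k : ℕ) (η : ℝ) : Prop :=
  ∀ ε > 0, DyadicMeanPorousWith μ k η ε

/-- The unit cube `[0,1)^d`. -/
def unitCube (d : ℕ) : Set (EuclideanSpace ℝ (Fin d)) :=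
  {x | ∀ j : Fin d, 0 ≤ x j ∧ x j < 1}

/-- The dyadic cube `D_n(x)` is porous: some dyadic subcube `k` levels below has
`μ`-measure at most `ε·μ(D_n(x))`. -/
def PorousCube {d : ℕ} (μ : Measure (EuclideanSpace ℝ (Fin d))) (ε : ℝ) (k n : ℕ)
    (x : EuclideanSpace ℝ (Fin d)) : Prop :=
  ∃ y ∈ dyadicCube d n x, μ (dyadicCube d (n + k) y) ≤ ENNReal.ofReal ε * μ (dyadicCube d n x)

/-- An admissible choice of small-measure subcubes: for every porous dyadic cube `D_n(x)`,
`c n x` marks a subcube `R = D_{n+k}(c n x) ⊆ D_n(x)` with `μ(R) ≤ ε·μ(D_n(x))`; the choice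
only depends on the cube `D_n(x)`. -/
structure AdmissibleChoice {d : ℕ} (μ : Measure (EuclideanSpace ℝ (Fin d))) (ε : ℝ)
    (k : ℕ) where
  c : ℕ → EuclideanSpace ℝ (Fin d) → EuclideanSpace ℝ (Fin d)
  mem : ∀ n x, PorousCube μ ε k n x → c n x ∈ dyadicCube d n x
  small : ∀ n x, PorousCube μ ε k n x →
    μ (dyadicCube d (n + k) (c n x)) ≤ ENNReal.ofReal ε * μ (dyadicCube d n x)
  compat : ∀ n x y, y ∈ dyadicCube d n x → c n y = c n x

open scoped Classical in
/-- The dyadic level of the offspring cube of the tree `R*` containing `y`, when the current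
node is the dyadic cube `D_m(y)`: if `D_m(y)` is not porous, subdivide into the dyadic cubes
of the next level; if it is porous with chosen small cube `R = D_{m+k}(c m y)`, the offspring
containing `y` is `R` itself if `y ∈ R`, and otherwise the first dyadic ancestor cube of `y`
below `D_m(y)` that does not contain `R`. -/
noncomputable def childLevel {d : ℕ} (μ : Measure (EuclideanSpace ℝ (Fin d))) (ε : ℝ)
    (k : ℕ) (C : AdmissibleChoice μ ε k) (m : ℕ) (y : EuclideanSpace ℝ (Fin d)) : ℕ :=
  if PorousCube μ ε k m y then
    (if C.c m y ∈ dyadicCube d (m + k) y then m + k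
     else m + sInf {j : ℕ | 1 ≤ j ∧ C.c m y ∉ dyadicCube d (m + j) y})
  else m + 1

/-- The dyadic level `M_n(x)` of the tree node `R_n(x)`, so that `R_n(x) = D_{M_n(x)}(x)`. -/
noncomputable def levelSeq {d : ℕ} (μ : Measure (EuclideanSpace ℝ (Fin d))) (ε : ℝ)
    (k : ℕ) (C : AdmissibleChoice μ ε k) (x : EuclideanSpace ℝ (Fin d)) : ℕ → ℕ
  | 0 => 0
  | n + 1 => childLevel μ ε k C (levelSeq μ ε k C x n) x


lemma my_floor_div (a : ℝ) (q : ℕ) (hq : 0 < q) : ⌊a / (q:ℝ)⌋ = ⌊a⌋ / (q:ℤ) := by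
  have hq' : (0:ℝ) < (q:ℝ) := by exact_mod_cast hq
  have hqz : (0:ℤ) < (q:ℤ) := by exact_mod_cast hq
  rw [Int.floor_eq_iff]
  constructor
  · rw [le_div_iff₀ hq']
    have h1 : ((⌊a⌋ / (q:ℤ)) * q : ℤ) ≤ ⌊a⌋ := Int.ediv_mul_le _ (by omega)
    calc ((⌊a⌋ / (q:ℤ) : ℤ) : ℝ) * q = (((⌊a⌋ / (q:ℤ)) * q : ℤ) : ℝ) := by push_cast; ring
      _ ≤ (⌊a⌋ : ℝ) := by exact_mod_cast h1
      _ ≤ a := Int.floor_le a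
  · rw [div_lt_iff₀ hq']
    have h1 : ⌊a⌋ < (⌊a⌋ / (q:ℤ) + 1) * q := Int.lt_ediv_add_one_mul_self _ hqz
    calc a < (⌊a⌋ : ℝ) + 1 := Int.lt_floor_add_one a
      _ ≤ (((⌊a⌋ / (q:ℤ) + 1) * q : ℤ) : ℝ) := by exact_mod_cast (by omega : ⌊a⌋ + 1 ≤ (⌊a⌋ / (q:ℤ) + 1) * q)
      _ = (((⌊a⌋ / (q:ℤ) : ℤ) : ℝ) + 1) * q := by push_cast; ring

lemma dyadicCube_anti {d : ℕ} {m m' : ℕ} (h : m ≤ m') (y : EuclideanSpace ℝ (Fin d)) :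
    dyadicCube d m' y ⊆ dyadicCube d m y := by
  intro z hz j
  have key : ∀ t : ℝ, ⌊(2:ℝ)^m * t⌋ = ⌊(2:ℝ)^m' * t⌋ / ((2^(m'-m) : ℕ) : ℤ) := by
    intro t
    have h2 : (2:ℝ)^m * t = ((2:ℝ)^m' * t) / (((2^(m'-m) : ℕ)) : ℝ) := by
      have : (2:ℝ)^m' = (2:ℝ)^m * (2:ℝ)^(m'-m) := by
        rw [← pow_add]; congr 1; omega
      rw [this]
      push_cast
      field_simp
    rw [h2, my_floor_div _ _ (by positivity)]
  have hzj := hz j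
  show ⌊(2:ℝ)^m * z j⌋ = ⌊(2:ℝ)^m * y j⌋
  rw [key, key, hzj]

lemma por2Le_porous {d : ℕ} {μ : Measure (EuclideanSpace ℝ (Fin d))} {x : EuclideanSpace ℝ (Fin d)}
    {i k : ℕ} {ε : ℝ} (h : por2Le μ x i k ε) : PorousCube μ ε k i x := by
  obtain ⟨j, hj1, hjk, y, hy, hle⟩ := h
  refine ⟨y, hy, le_trans (measure_mono ?_) hle⟩
  exact dyadicCube_anti (by omega) y

lemma childLevel_gt {d : ℕ} (μ : Measure (EuclideanSpace ℝ (Fin d))) (ε : ℝ) (k : ℕ)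
    (hk : 1 ≤ k) (C : AdmissibleChoice μ ε k) (m : ℕ) (y : EuclideanSpace ℝ (Fin d)) :
    m < childLevel μ ε k C m y := by
  unfold childLevel
  split_ifs with h1 h2
  · omega
  · have hmem := Nat.sInf_mem (⟨k, hk, h2⟩ :
      {j : ℕ | 1 ≤ j ∧ C.c m y ∉ dyadicCube d (m + j) y}.Nonempty)
    have := hmem.1
    omega
  · omega

lemma levelSeq_strictMono {d : ℕ} (μ : Measure (EuclideanSpace ℝ (Fin d))) (ε : ℝ) (k : ℕ)
    (hk : 1 ≤ k) (C : AdmissibleChoice μ ε k) (x : EuclideanSpace ℝ (Fin d)) :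
    StrictMono (levelSeq μ ε k C x) := by
  apply strictMono_nat_of_lt_succ
  intro n
  exact childLevel_gt μ ε k hk C _ x

lemma key_count {d k : ℕ} (hk : 1 ≤ k) (ε : ℝ) (μ : Measure (EuclideanSpace ℝ (Fin d)))
    (C : AdmissibleChoice μ ε k) (x : EuclideanSpace ℝ (Fin d)) (n : ℕ) (hn : 1 ≤ n) :
    (Set.ncard {i : ℕ | i < levelSeq μ ε k C x n ∧ por2Le μ x i k ε} : ℝ) /
        (levelSeq μ ε k C x n : ℝ) ≤
      1 - (Set.ncard {i : ℕ | i < n ∧ ¬ PorousCube μ ε k (levelSeq μ ε k C x i) x} : ℝ)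
            / (levelSeq μ ε k C x n : ℝ) := by
  classical
  set M := levelSeq μ ε k C x with hM
  have hmono := levelSeq_strictMono μ ε k hk C x
  have hMn : n ≤ M n := hmono.le_apply
  have hMpos : 0 < M n := lt_of_lt_of_le hn hMn
  set m := M n with hm
  -- finiteness
  have hfinB : {i : ℕ | i < m ∧ ¬ por2Le μ x i k ε}.Finite :=
    (Set.finite_Iio m).subset (fun i hi => hi.1)
  have hfinG : {i : ℕ | i < m ∧ por2Le μ x i k ε}.Finite :=
    (Set.finite_Iio m).subset (fun i hi => hi.1)
  -- Claim 1 : N ≤ B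
  have hNB : {i : ℕ | i < n ∧ ¬ PorousCube μ ε k (M i) x}.ncard ≤
      {i : ℕ | i < m ∧ ¬ por2Le μ x i k ε}.ncard := by
    exact Set.ncard_le_ncard_of_injOn M
      (fun i hi => ⟨hmono hi.1, fun hpor => hi.2 (por2Le_porous hpor)⟩)
      (fun a _ b _ hab => hmono.injective hab) hfinB
  -- Claim 2 : G + B = m
  have hGB : {i : ℕ | i < m ∧ por2Le μ x i k ε}.ncard +
      {i : ℕ | i < m ∧ ¬ por2Le μ x i k ε}.ncard = m := by
    have hunion : {i : ℕ | i < m ∧ por2Le μ x i k ε} ∪ {i : ℕ | i < m ∧ ¬ por2Le μ x i k ε}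
        = Set.Iio m := by
      ext i
      simp only [Set.mem_union, Set.mem_setOf_eq, Set.mem_Iio]
      tauto
    have hdisj : Disjoint {i : ℕ | i < m ∧ por2Le μ x i k ε}
        {i : ℕ | i < m ∧ ¬ por2Le μ x i k ε} := by
      rw [Set.disjoint_left]
      rintro i ⟨_, hp⟩ ⟨_, hnp⟩
      exact hnp hp
    have := Set.ncard_union_eq hdisj hfinG hfinB
    rw [hunion] at this
    rw [← this]
    have : (Set.Iio m).ncard = m := by
      rw [show Set.Iio m = ((Finset.range m : Finset ℕ) : Set ℕ) by
        ext i; simp [Set.mem_Iio]]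
      rw [Set.ncard_coe_finset, Finset.card_range]
    omega
  -- arithmetic
  have hmR : (0:ℝ) < (m:ℝ) := by exact_mod_cast hMpos
  rw [div_le_iff₀ hmR, sub_mul, div_mul_cancel₀ _ (ne_of_gt hmR), one_mul]
  have c1 : ({i : ℕ | i < n ∧ ¬ PorousCube μ ε k (M i) x}.ncard : ℝ) ≤
      ({i : ℕ | i < m ∧ ¬ por2Le μ x i k ε}.ncard : ℝ) := by exact_mod_cast hNB
  have c2 : ({i : ℕ | i < m ∧ por2Le μ x i k ε}.ncard : ℝ) +
      ({i : ℕ | i < m ∧ ¬ por2Le μ x i k ε}.ncard : ℝ) = (m:ℝ) := by exact_mod_cast hGB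
  linarith

/-- Let `μ` be a dyadic mean `(k,η,ε)`-porous probability measure on
`[0,1)^d` with `ε ∈ [0,2^{-kd}]`, and let `R*` be the associated tree (for any admissible
choice `C`). With `N_n(x) = #{i < n : R_i(x) ∈ 𝒩}`, `M_n(x)` the dyadic level of `R_n(x)`
and `η_n(x) = 1 − N_n(x)/M_n(x)`, one has `liminf_n η_n(x) ≥ η` for `μ`-a.e. `x`. -/
theorem liminf_good_scale_fraction (d k : ℕ) (hd : 1 ≤ d) (hk : 1 ≤ k) (ε η : ℝ)
    (hε0 : 0 ≤ ε) (hε : ε ≤ ((2 : ℝ) ^ (k * d))⁻¹)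
    (μ : Measure (EuclideanSpace ℝ (Fin d))) [IsProbabilityMeasure μ]
    (hsupp : μ (unitCube d) = 1)
    (hpor : DyadicMeanPorousWith μ k η ε) (C : AdmissibleChoice μ ε k) :
    ∀ᵐ x ∂μ, η ≤ Filter.liminf (fun n : ℕ =>
      1 - (Set.ncard {i : ℕ | i < n ∧ ¬ PorousCube μ ε k (levelSeq μ ε k C x i) x} : ℝ)
            / (levelSeq μ ε k C x n : ℝ)) Filter.atTop := by
  filter_upwards [hpor] with x hx
  have hmono := levelSeq_strictMono μ ε k hk C x
  have hg0 : ∀ m : ℕ, (0:ℝ) ≤ (Set.ncard {i : ℕ | i < m ∧ por2Le μ x i k ε} : ℝ) / m :=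
    fun m => div_nonneg (by positivity) (by positivity)
  have hh1 : ∀ n : ℕ,
      1 - (Set.ncard {i : ℕ | i < n ∧ ¬ PorousCube μ ε k (levelSeq μ ε k C x i) x} : ℝ)
            / (levelSeq μ ε k C x n : ℝ) ≤ 1 := by
    intro n
    have : (0:ℝ) ≤ (Set.ncard {i : ℕ | i < n ∧ ¬ PorousCube μ ε k (levelSeq μ ε k C x i) x} : ℝ)
        / (levelSeq μ ε k C x n : ℝ) := div_nonneg (by positivity) (by positivity)
    linarith
  by_contra hcon
  push_neg at hcon
  set L := Filter.liminf (fun n : ℕ =>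
      1 - (Set.ncard {i : ℕ | i < n ∧ ¬ PorousCube μ ε k (levelSeq μ ε k C x i) x} : ℝ)
            / (levelSeq μ ε k C x n : ℝ)) Filter.atTop with hL
  have hbη : (L + η)/2 < η := by linarith
  have hLb : L < (L + η)/2 := by linarith
  have h1 : (L + η)/2 < Filter.liminf
      (fun n : ℕ => (Set.ncard {i : ℕ | i < n ∧ por2Le μ x i k ε} : ℝ) / n) Filter.atTop :=
    lt_of_lt_of_le hbη hx
  have hbdd : Filter.IsBoundedUnder (· ≥ ·) Filter.atTop
      (fun n : ℕ => (Set.ncard {i : ℕ | i < n ∧ por2Le μ x i k ε} : ℝ) / n) :=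
    ⟨0, Filter.eventually_map.2 (Filter.Eventually.of_forall hg0)⟩
  have hev := Filter.eventually_lt_of_lt_liminf h1 hbdd
  obtain ⟨m0, hm0⟩ := Filter.eventually_atTop.1 hev
  have hev2 : ∀ᶠ n in Filter.atTop, (L + η)/2 ≤
      1 - (Set.ncard {i : ℕ | i < n ∧ ¬ PorousCube μ ε k (levelSeq μ ε k C x i) x} : ℝ)
            / (levelSeq μ ε k C x n : ℝ) := by
    rw [Filter.eventually_atTop]
    refine ⟨max m0 1, fun n hn => ?_⟩
    have hn1 : 1 ≤ n := le_trans (le_max_right _ _) hn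
    have hnm0 : m0 ≤ n := le_trans (le_max_left _ _) hn
    have hMn : m0 ≤ levelSeq μ ε k C x n := le_trans hnm0 hmono.le_apply
    have hlt := hm0 _ hMn
    have hkey := key_count hk ε μ C x n hn1
    exact le_trans (le_of_lt hlt) hkey
  have hfin : (L + η)/2 ≤ L := by
    rw [hL]
    exact Filter.le_liminf_of_le
      (Filter.isCoboundedUnder_ge_of_le Filter.atTop hh1) hev2
  linarith
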